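/- Let H be a real Hilbert space, C : H → H a continuous linear operator that is self-adjoint and positive, and k ∈ ℝ^{n×n} a symmetric positive semidefinite matrix. On the Hilbert space H^n (with inner product ⟨ψ, φ⟩ = Σ_{i=1}^n ⟨ψ_i, φ_i⟩), define the block operator A by (Aψ)_i = Σ_{j=1}^n k_{ij} C ψ_j. Then A is a continuous, self-adjoint, positive linear operator on H^n, and consequently, for every λ > 0 the operator A + λ·Id is bijective; in particular, for every u ∈ H^n the system Σ_{j=1}^n k_{ij} C h_j + λ h_i = u_i (i = 1, …, n) has a unique solution h ∈ H^n. -/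

import Mathlib

set_option synthInstance.maxHeartbeats 1000000
set_option maxHeartbeats 1000000

open scoped RealInnerProductSpace BigOperators
open Matrix

/-- For a self-adjoint positive continuous linear operator `C` on a
real Hilbert space `H` and a symmetric positive semidefinite matrix `k`, the block
operator `(Aψ)ᵢ = Σⱼ kᵢⱼ C ψⱼ` on `Hⁿ` is a continuous, self-adjoint, positive
linear operator; consequently for every `λ > 0` the operator `A + λ Id` is
bijective, and the system `Σⱼ kᵢⱼ C hⱼ + λ hᵢ = uᵢ` has a unique solution. -/
theorem block_operator_selfAdjoint_positive_and_system_unique_solution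
    {H : Type*} [NormedAddCommGroup H] [InnerProductSpace ℝ H] [CompleteSpace H]
    (n : ℕ) (C : H →L[ℝ] H)
    (hself : ∀ φ ψ : H, ⟪C φ, ψ⟫ = ⟪φ, C ψ⟫)
    (hpos : ∀ φ : H, 0 ≤ ⟪C φ, φ⟫)
    (k : Matrix (Fin n) (Fin n) ℝ) (hsym : k.IsSymm)
    (hpsd : ∀ c : Fin n → ℝ, 0 ≤ c ⬝ᵥ k.mulVec c) :
    ∃ A : PiLp 2 (fun _ : Fin n => H) →L[ℝ] PiLp 2 (fun _ : Fin n => H),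
      (∀ (ψ : PiLp 2 fun _ : Fin n => H) (i : Fin n), A ψ i = ∑ j, k i j • C (ψ j)) ∧
      (∀ ψ φ : PiLp 2 fun _ : Fin n => H, ⟪A ψ, φ⟫ = ⟪ψ, A φ⟫) ∧
      (∀ ψ : PiLp 2 fun _ : Fin n => H, 0 ≤ ⟪A ψ, ψ⟫) ∧
      ∀ lam : ℝ, 0 < lam →
        Function.Bijective (fun ψ : PiLp 2 fun _ : Fin n => H => A ψ + lam • ψ) ∧
        ∀ u : Fin n → H, ∃! h : Fin n → H,
          ∀ i, (∑ j, k i j • C (h j)) + lam • h i = u i := by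
  classical
  set E := PiLp 2 (fun _ : Fin n => H) with hE
  haveI : CompleteSpace E := inferInstance
  have hadd : ∀ ψ φ : E,
      (fun i => ∑ j, k i j • C ((ψ + φ) j)) =
        (fun i => ∑ j, k i j • C (ψ j)) + fun i => ∑ j, k i j • C (φ j) := by
    intro ψ φ
    funext i
    show ∑ j, k i j • C (ψ j + φ j) = (∑ j, k i j • C (ψ j)) + ∑ j, k i j • C (φ j)
    rw [← Finset.sum_add_distrib]
    exact Finset.sum_congr rfl fun j _ => by rw [map_add, smul_add]
  have hsmul : ∀ (c : ℝ) (ψ : E),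
      (fun i => ∑ j, k i j • C ((c • ψ) j)) = c • fun i => ∑ j, k i j • C (ψ j) := by
    intro c ψ
    funext i
    show ∑ j, k i j • C (c • ψ j) = c • ∑ j, k i j • C (ψ j)
    rw [Finset.smul_sum]
    exact Finset.sum_congr rfl fun j _ => by rw [C.map_smul, smul_comm]
  have hcont : Continuous fun ψ : E => (fun i => ∑ j, k i j • C (ψ j) : ∀ _ : Fin n, H) := by
    have h1 : Continuous fun ψ : E => (ψ : ∀ _ : Fin n, H) :=
      PiLp.continuous_ofLp 2 (fun _ : Fin n => H)
    have h2 : Continuous fun ψ : ∀ _ : Fin n, H =>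
        (fun i => ∑ j, k i j • C (ψ j) : ∀ _ : Fin n, H) := by
      refine continuous_pi fun i => ?_
      exact continuous_finset_sum _ fun j _ =>
        ((C.continuous.comp (continuous_apply j)).const_smul _)
    exact h2.comp h1
  let A : E →L[ℝ] E :=
    { toFun := fun ψ => WithLp.toLp 2 fun i => ∑ j, k i j • C (ψ j)
      map_add' := fun ψ φ => congrArg (WithLp.toLp 2) (hadd ψ φ)
      map_smul' := fun c ψ => congrArg (WithLp.toLp 2) (hsmul c ψ)
      cont := (PiLp.continuous_toLp 2 (fun _ : Fin n => H)).comp hcont }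
  have hApp : ∀ (ψ : E) (i : Fin n), A ψ i = ∑ j, k i j • C (ψ j) := fun ψ i => rfl
  -- expansion of the inner product
  have expand : ∀ ψ φ : E, ⟪A ψ, φ⟫ = ∑ i, ∑ j, k i j * ⟪C (ψ j), φ i⟫ := by
    intro ψ φ
    rw [PiLp.inner_apply]
    refine Finset.sum_congr rfl fun i _ => ?_
    show ⟪∑ j, k i j • C (ψ j), φ i⟫ = _
    rw [sum_inner]
    exact Finset.sum_congr rfl fun j _ => real_inner_smul_left _ _ _
  -- self-adjointness
  have hselfA : ∀ ψ φ : E, ⟪A ψ, φ⟫ = ⟪ψ, A φ⟫ := by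
    intro ψ φ
    rw [real_inner_comm (A φ) ψ, expand, expand]
    calc ∑ i, ∑ j, k i j * ⟪C (ψ j), φ i⟫
        = ∑ i, ∑ j, k i j * ⟪C (φ i), ψ j⟫ := by
          refine Finset.sum_congr rfl fun i _ => Finset.sum_congr rfl fun j _ => ?_
          rw [hself (ψ j) (φ i), real_inner_comm]
      _ = ∑ j, ∑ i, k i j * ⟪C (φ i), ψ j⟫ := Finset.sum_comm
      _ = ∑ i, ∑ j, k j i * ⟪C (φ j), ψ i⟫ := rfl
      _ = ∑ i, ∑ j, k i j * ⟪C (φ j), ψ i⟫ := by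
          refine Finset.sum_congr rfl fun i _ => Finset.sum_congr rfl fun j _ => ?_
          rw [hsym.apply i j]
  -- positivity via the matrix square root
  have hherm : k.IsHermitian := by
    ext i j
    simp [Matrix.conjTranspose_apply, hsym.apply i j]
  have hk : k.PosSemidef := .of_dotProduct_mulVec_nonneg hherm fun x => by simpa using hpsd x
  open scoped MatrixOrder in set s := CFC.sqrt k with hs_def
  have hs : s * s = k := by open scoped MatrixOrder in exact CFC.sqrt_mul_sqrt_self k hk.nonneg
  have ssym : ∀ i j, s i j = s j i := by
    intro i j
    have h2 := by open scoped MatrixOrder in exact (CFC.sqrt_nonneg k).posSemidef.isHermitian.apply j i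
    simpa using h2
  have hposA : ∀ ψ : E, 0 ≤ ⟪A ψ, ψ⟫ := by
    intro ψ
    have key : ⟪A ψ, ψ⟫ = ∑ l, ⟪C (∑ j, s l j • (ψ j : H)), ∑ i, s l i • ψ i⟫ := by
      have hrhs : ∀ l, ⟪C (∑ j, s l j • (ψ j : H)), ∑ i, s l i • ψ i⟫
          = ∑ i, ∑ j, s l i * (s l j * ⟪C (ψ j), ψ i⟫) := by
        intro l
        rw [inner_sum]
        refine Finset.sum_congr rfl fun i _ => ?_
        rw [real_inner_smul_right, map_sum, sum_inner]
        rw [Finset.mul_sum]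
        refine Finset.sum_congr rfl fun j _ => ?_
        rw [C.map_smul, real_inner_smul_left]
      rw [expand]
      calc ∑ i, ∑ j, k i j * ⟪C (ψ j), ψ i⟫
          = ∑ i, ∑ j, ∑ l, s l i * (s l j * ⟪C (ψ j), ψ i⟫) := by
            refine Finset.sum_congr rfl fun i _ => Finset.sum_congr rfl fun j _ => ?_
            rw [← hs, Matrix.mul_apply, Finset.sum_mul]
            refine Finset.sum_congr rfl fun l _ => ?_
            rw [ssym i l]; ring
        _ = ∑ i, ∑ l, ∑ j, s l i * (s l j * ⟪C (ψ j), ψ i⟫) := by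
            exact Finset.sum_congr rfl fun i _ => Finset.sum_comm
        _ = ∑ l, ∑ i, ∑ j, s l i * (s l j * ⟪C (ψ j), ψ i⟫) := Finset.sum_comm
        _ = ∑ l, ⟪C (∑ j, s l j • (ψ j : H)), ∑ i, s l i • ψ i⟫ := by
            exact Finset.sum_congr rfl fun l _ => (hrhs l).symm
    rw [key]
    exact Finset.sum_nonneg fun l _ => hpos _
  refine ⟨A, hApp, hselfA, hposA, ?_⟩
  intro lam hlam
  -- the operator A + lam • id is bijective via Lax–Milgram
  set T : E →L[ℝ] E := A + lam • ContinuousLinearMap.id ℝ E with hT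
  have hTapp : ∀ ψ : E, T ψ = A ψ + lam • ψ := fun ψ => rfl
  set B : E →L[ℝ] E →L[ℝ] ℝ := (innerSL ℝ).comp T with hB
  have hBapp : ∀ v w : E, B v w = ⟪T v, w⟫ := fun v w => rfl
  have coercive : IsCoercive B := by
    refine ⟨lam, hlam, fun u => ?_⟩
    have h1 : B u u = ⟪A u, u⟫ + lam * ⟪u, u⟫ := by
      rw [hBapp, hTapp, inner_add_left, real_inner_smul_left]
    have h2 : ⟪u, u⟫ = ‖u‖ * ‖u‖ := real_inner_self_eq_norm_mul_norm u
    have h3 := hposA u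
    nlinarith [h3]
  set Eq := coercive.continuousLinearEquivOfBilin with hEq
  have hEqT : ∀ v : E, Eq v = T v := by
    intro v
    refine ext_inner_right ℝ fun w => ?_
    rw [coercive.continuousLinearEquivOfBilin_apply, hBapp]
  have hbij : Function.Bijective (fun ψ : E => A ψ + lam • ψ) := by
    have : (fun ψ : E => A ψ + lam • ψ) = ⇑Eq := by
      funext ψ; rw [hEqT, hTapp]
    rw [this]
    exact Eq.bijective
  refine ⟨hbij, ?_⟩
  intro u
  obtain ⟨h, hh⟩ := hbij.surjective (WithLp.toLp 2 u : E)
  refine ⟨h.ofLp, fun i => congrArg (fun x : E => x i) hh, fun h' hh' => ?_⟩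
  exact congrArg WithLp.ofLp (hbij.injective (a₁ := (WithLp.toLp 2 h' : E))
    (by ext i; exact (hh' i).trans (congrArg (fun x : E => x i) hh).symm))
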